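/- In the Drinfeld double U_{β,ξ} = ̂𝔣⁺ ⊗ ̂𝔣⁻ (identifying x∈ ̂𝔣⁺ with x⊗1 and y∈ ̂𝔣⁻ with 1⊗y), the following relations hold for all i,j∈I: K_i'E_j = ⟨j,i⟩^{−1}ξ(i,j)·E_jK_i', J_i'E_j = E_jJ_i', F_jK_i = ⟨i,j⟩·K_iF_j, F_jJ_i = ξ(j,i)·J_iF_j, and E_iF_j − ξ(j,i)^{−1}F_jE_i = δ_{ij}·(K_iJ_i' − J_iK_i')/(v_i − v_i^{−1}). -/

import Mathlib

open scoped TensorProduct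

noncomputable section

/-- A Cartan datum on `I`. -/
structure CartanDatum (I : Type) where
  c : I → I → ℤ
  symm : ∀ i j, c i j = c j i
  pos : ∀ i, 0 < c i i
  even : ∀ i, Even (c i i)
  dvd : ∀ i j, i ≠ j → c i i ∣ 2 * c i j
  nonpos : ∀ i j, i ≠ j → 2 * c i j ≤ 0

namespace CartanDatum

variable {I : Type} (cd : CartanDatum I)

/-- `d i = (i·i)/2`. -/
def d (i : I) : ℤ := cd.c i i / 2

/-- `a i j = 2(i·j)/(i·i)`. -/
def a (i j : I) : ℤ := 2 * cd.c i j / cd.c i i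

/-- Extension of the pairing to `ℕ[I] × ℕ[I]`. -/
def dotN (ν μ : I →₀ ℕ) : ℤ :=
  ν.sum fun i m => μ.sum fun j n => (m : ℤ) * (n : ℤ) * cd.c i j

end CartanDatum

/-- A multiplicative bilinear form `ℕ[I] × ℕ[I] → 𝔽`. -/
structure MultForm (I 𝔽 : Type) [Field 𝔽] where
  f : (I →₀ ℕ) → (I →₀ ℕ) → 𝔽
  add_left : ∀ ν ν' μ, f (ν + ν') μ = f ν μ * f ν' μ
  add_right : ∀ μ ν ν', f μ (ν + ν') = f μ ν * f μ ν'
  ne_zero : ∀ ν μ, f ν μ ≠ 0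

/-- The trivial multiplicative bilinear form, constantly `1`. -/
def trivMF (I 𝔽 : Type) [Field 𝔽] : MultForm I 𝔽 :=
  ⟨fun _ _ => 1, fun _ _ _ => by ring, fun _ _ _ => by ring, fun _ _ => one_ne_zero⟩

variable {I : Type}

/-- The generator `i` of `ℕ[I]`. -/
def δN (i : I) : I →₀ ℕ := Finsupp.single i 1

/-- The model for the free algebra `'𝔣` on the `θ i`. -/
abbrev FA (𝔽 I : Type) [Field 𝔽] := MonoidAlgebra 𝔽 (FreeMonoid I)

/-- The generator `θ i` of `'𝔣`. -/
def θ (𝔽 : Type) [Field 𝔽] {I : Type} (i : I) : FA 𝔽 I :=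
  MonoidAlgebra.of 𝔽 (FreeMonoid I) (FreeMonoid.of i)

/-- The `ℕ[I]`-degree of a word. -/
def wt [DecidableEq I] (w : FreeMonoid I) : I →₀ ℕ :=
  Multiset.toFinsupp (↑(FreeMonoid.toList w))

/-- Homogeneity of degree `ν` in `'𝔣`. -/
def IsHomog {𝔽 : Type} [Field 𝔽] [DecidableEq I] (ν : I →₀ ℕ) (x : FA 𝔽 I) : Prop :=
  ∀ w ∈ Finsupp.support (x.coeff : FreeMonoid I →₀ 𝔽), wt w = ν

/-- The model for `'𝔣 ⊗ '𝔣` (basis: pairs of words). -/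
abbrev TA (𝔽 I : Type) [Field 𝔽] := MonoidAlgebra 𝔽 (FreeMonoid I × FreeMonoid I)

/-- The tensor `x ⊗ y` in the model of `'𝔣 ⊗ '𝔣`. -/
def tmul {𝔽 : Type} [Field 𝔽] (x y : FA 𝔽 I) : TA 𝔽 I :=
  Finsupp.sum (x.coeff : FreeMonoid I →₀ 𝔽) fun w a =>
    Finsupp.sum (y.coeff : FreeMonoid I →₀ 𝔽) fun u b =>
      MonoidAlgebra.ofCoeff (Finsupp.single (w, u) (a * b) : (FreeMonoid I × FreeMonoid I) →₀ 𝔽)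

/-- The twisted multiplication on `'𝔣 ⊗ '𝔣`:
`(x₁⊗x₂)(y₁⊗y₂) = v^{-|y₁|·|x₂|} β(|x₂|,|y₁|) x₁y₁ ⊗ x₂y₂`. -/
def tMul [DecidableEq I] {𝔽 : Type} [Field 𝔽] (cd : CartanDatum I) (v : 𝔽)
    (β : MultForm I 𝔽) (z z' : TA 𝔽 I) : TA 𝔽 I :=
  Finsupp.sum (z.coeff : (FreeMonoid I × FreeMonoid I) →₀ 𝔽) fun p a =>
    Finsupp.sum (z'.coeff : (FreeMonoid I × FreeMonoid I) →₀ 𝔽) fun q b =>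
      MonoidAlgebra.ofCoeff (Finsupp.single (p.1 * q.1, p.2 * q.2)
        (a * b * v ^ (-(cd.dotN (wt q.1) (wt p.2))) * β.f (wt p.2) (wt q.1))
        : (FreeMonoid I × FreeMonoid I) →₀ 𝔽)

/-- The bilinear form on `'𝔣 ⊗ '𝔣` induced by a form `B` on `'𝔣`:
`(x₁⊗x₂, y₁⊗y₂) = α(|x₁|,|x₂|) (x₁,y₁) (x₂,y₂)` for homogeneous `x₁, x₂`. -/
def pairT [DecidableEq I] {𝔽 : Type} [Field 𝔽] (α : MultForm I 𝔽)
    (B : FA 𝔽 I →ₗ[𝔽] FA 𝔽 I →ₗ[𝔽] 𝔽) (z z' : TA 𝔽 I) : 𝔽 :=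
  Finsupp.sum (z.coeff : (FreeMonoid I × FreeMonoid I) →₀ 𝔽) fun p a =>
    Finsupp.sum (z'.coeff : (FreeMonoid I × FreeMonoid I) →₀ 𝔽) fun q b =>
      a * b * α.f (wt p.1) (wt p.2)
        * B (MonoidAlgebra.single p.1 1) (MonoidAlgebra.single q.1 1)
        * B (MonoidAlgebra.single p.2 1) (MonoidAlgebra.single q.2 1)

/-- The quantum integer `[n]_c`. -/
def qnum {𝔽 : Type} [Field 𝔽] (c : 𝔽) (n : ℕ) : 𝔽 :=
  (c ^ (n : ℤ) - c ^ (-(n : ℤ))) / (c - c⁻¹)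

/-- The quantum factorial `[n]_c!`. -/
def qfact {𝔽 : Type} [Field 𝔽] (c : 𝔽) (n : ℕ) : 𝔽 :=
  ∏ k ∈ Finset.range n, qnum c (k + 1)

/-- The divided power `θ_i^{(n)} = θ_i^n / [n]_{v_i}!`. -/
def θdiv [DecidableEq I] {𝔽 : Type} [Field 𝔽] (cd : CartanDatum I) (v : 𝔽)
    (i : I) (n : ℕ) : FA 𝔽 I :=
  (qfact (v ^ cd.d i) n)⁻¹ • (θ 𝔽 i) ^ n

/-- The twisted quantum Serre element
`D_{ij} = Σ_{k+k'=1-a_{ij}} (-1)^k β(i,j)^{-k} θ_i^{(k)} θ_j θ_i^{(k')}`. -/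
def Dij [DecidableEq I] {𝔽 : Type} [Field 𝔽] (cd : CartanDatum I) (v : 𝔽)
    (g : I → I → 𝔽) (i j : I) : FA 𝔽 I :=
  ∑ k ∈ Finset.range ((1 - cd.a i j).toNat + 1),
    ((-1 : 𝔽) ^ k * ((g i j)⁻¹) ^ k) •
      (θdiv cd v i k * θ 𝔽 j * θdiv cd v i ((1 - cd.a i j).toNat - k))

end
noncomputable section

variable {I : Type}

/-- The generator `i` of `ℤ[I]`. -/
def δZ (i : I) : I →₀ ℤ := Finsupp.single i 1

/-- The inclusion `ℕ[I] → ℤ[I]`. -/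
def nz (ν : I →₀ ℕ) : I →₀ ℤ := Finsupp.mapRange (fun n : ℕ => (n : ℤ)) rfl ν

/-- The multiplicative extension to `ℤ[I] × ℤ[I]` of generator values `g : I → I → 𝔽`. -/
def extZ {𝔽 : Type} [Field 𝔽] (g : I → I → 𝔽) (ν μ : I →₀ ℤ) : 𝔽 :=
  ν.prod fun i m => μ.prod fun j n => g i j ^ (m * n)

/-- The form `⟨i,j⟩ = v^{-i·j} β(i,j) ξ(j,i)`, extended multiplicatively to `ℤ[I]`. -/
def ang {𝔽 : Type} [Field 𝔽] (cd : CartanDatum I) (v : 𝔽) (βg ξg : I → I → 𝔽) :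
    (I →₀ ℤ) → (I →₀ ℤ) → 𝔽 :=
  extZ fun i j => v ^ (-(cd.c i j)) * βg i j * ξg j i

/-- The monomial in `F : I → A` associated with a word `w`. -/
def wordProd {A : Type} [Monoid A] (F : I → A) (w : FreeMonoid I) : A :=
  ((FreeMonoid.toList w).map F).prod

/-- `x` is homogeneous of degree `μ` in the subalgebra generated by the image of `F`. -/
def HomogIn (𝔽 : Type) [Field 𝔽] [DecidableEq I] {A : Type} [Ring A] [Algebra 𝔽 A]
    (F : I → A) (μ : I →₀ ℕ) (x : A) : Prop :=
  x ∈ Submodule.span 𝔽 {z | ∃ w, wt w = μ ∧ z = wordProd F w}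

end
theorem drinfeld_double_relations
    {I : Type} [Fintype I] [DecidableEq I] (cd : CartanDatum I)
    {𝔽 : Type} [Field 𝔽] [CharZero 𝔽] (v : 𝔽) (hv : Transcendental ℚ v)
    (βg ξg : I → I → 𝔽)
    (hββ : ∀ i j, βg i j * βg j i = 1) (hβii : ∀ i, βg i i = 1)
    (hξsymm : ∀ i j, ξg i j = ξg j i) (hξne : ∀ i j, ξg i j ≠ 0)
    {Ap : Type} [Ring Ap] [Algebra 𝔽 Ap]
    (E : I → Ap) (K Jp : (I →₀ ℤ) → Ap)
    (hK0 : K 0 = 1) (hKadd : ∀ a b, K (a + b) = K a * K b)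
    (hJ0 : Jp 0 = 1) (hJadd : ∀ a b, Jp (a + b) = Jp a * Jp b)
    (hKJ : ∀ a b, K a * Jp b = Jp b * K a)
    (hKE : ∀ i j : I, K (δZ i) * E j = ang cd v βg ξg (δZ i) (δZ j) • (E j * K (δZ i)))
    (hJE : ∀ i j : I, Jp (δZ i) * E j = ξg j i • (E j * Jp (δZ i)))
    (bp : Module.Basis ((I →₀ ℤ) × FreeMonoid I × (I →₀ ℤ)) 𝔽 Ap)
    (hbp : ∀ p, bp p = K p.1 * wordProd E p.2.1 * Jp p.2.2)
    {Am : Type} [Ring Am] [Algebra 𝔽 Am]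
    (F : I → Am) (K' J' : (I →₀ ℤ) → Am)
    (hK'0 : K' 0 = 1) (hK'add : ∀ a b, K' (a + b) = K' a * K' b)
    (hJ'0 : J' 0 = 1) (hJ'add : ∀ a b, J' (a + b) = J' a * J' b)
    (hK'J' : ∀ a b, K' a * J' b = J' b * K' a)
    (hK'F : ∀ i j : I, K' (δZ i) * F j
      = (ang cd v βg ξg (δZ j) (δZ i) * (ξg i j)⁻¹) • (F j * K' (δZ i)))
    (hJ'F : ∀ i j : I, J' (δZ i) * F j = F j * J' (δZ i))
    (bm : Module.Basis ((I →₀ ℤ) × FreeMonoid I × (I →₀ ℤ)) 𝔽 Am)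
    (hbm : ∀ p, bm p = K' p.1 * wordProd F p.2.1 * J' p.2.2)
    (cK cJ : (I →₀ ℤ) → (Am →ₗ[𝔽] Am))
    (hcK : ∀ (ν τ₁ τ₂ : I →₀ ℤ) (w : FreeMonoid I),
      cK ν (K' τ₁ * wordProd F w * J' τ₂)
        = (ang cd v βg ξg ν τ₁ * ang cd v βg ξg ν (nz (wt w))) • (K' τ₁ * wordProd F w * J' τ₂))
    (hcJ : ∀ (ν τ₁ τ₂ : I →₀ ℤ) (w : FreeMonoid I),
      cJ ν (K' τ₁ * wordProd F w * J' τ₂)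
        = (extZ ξg τ₁ ν * extZ ξg (nz (wt w)) ν) • (K' τ₁ * wordProd F w * J' τ₂))
    (iS : I → (Am →ₗ[𝔽] Am))
    (hiS0 : ∀ (j : I) (τ₁ τ₂ : I →₀ ℤ), iS j (K' τ₁ * J' τ₂) = 0)
    (hiSF : ∀ j i : I, iS j (F i) = if i = j then ξg i j • (1 : Am) else 0)
    (hiSmul : ∀ (j : I) (x y : Am), iS j (x * y) = iS j x * cJ (δZ j) y + cK (δZ j) x * iS j y)
    (ρ : Ap →ₗ[𝔽] Module.End 𝔽 Am)
    (hρanti : ∀ x y : Ap, ρ (x * y) = ρ y * ρ x) (hρ1 : ρ 1 = 1)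
    (hρE : ∀ j : I, ρ (E j) = (v ^ (-(cd.d j)) - v ^ (cd.d j))⁻¹ • iS j)
    (hρK : ∀ i : I, ρ (K (δZ i)) = cK (δZ i))
    (hρKinv : ∀ i : I, ρ (K (-(δZ i))) = cK (-(δZ i)))
    (hρJ : ∀ i : I, ρ (Jp (δZ i)) = cJ (δZ i))
    (hρJinv : ∀ i : I, ρ (Jp (-(δZ i))) = cJ (-(δZ i)))
    (εm : Am →ₐ[𝔽] 𝔽)
    (hεmF : ∀ i, εm (F i) = 0) (hεmK' : ∀ ν, εm (K' ν) = 1) (hεmJ' : ∀ ν, εm (J' ν) = 1)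
    (εp : Ap →ₐ[𝔽] 𝔽)
    (hεpE : ∀ i, εp (E i) = 0) (hεpK : ∀ ν, εp (K ν) = 1) (hεpJ : ∀ ν, εp (Jp ν) = 1)
    (Δp : Ap →ₐ[𝔽] (Ap ⊗[𝔽] Ap))
    (hΔpE : ∀ i, Δp (E i) = E i ⊗ₜ[𝔽] Jp (δZ i) + K (δZ i) ⊗ₜ[𝔽] E i)
    (hΔpK : ∀ ν, Δp (K ν) = K ν ⊗ₜ[𝔽] K ν) (hΔpJ : ∀ ν, Δp (Jp ν) = Jp ν ⊗ₜ[𝔽] Jp ν)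
    (Δm : Am →ₐ[𝔽] (Am ⊗[𝔽] Am))
    (hΔmF : ∀ i, Δm (F i) = J' (δZ i) ⊗ₜ[𝔽] F i + F i ⊗ₜ[𝔽] K' (δZ i))
    (hΔmK' : ∀ ν, Δm (K' ν) = K' ν ⊗ₜ[𝔽] K' ν) (hΔmJ' : ∀ ν, Δm (J' ν) = J' ν ⊗ₜ[𝔽] J' ν)
    (Sp : Ap →ₗ[𝔽] Ap) (hSp1 : Sp 1 = 1) (hSpanti : ∀ x y, Sp (x * y) = Sp y * Sp x)
    (hSpE : ∀ i, Sp (E i) = -(K (-(δZ i)) * E i * Jp (-(δZ i))))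
    (hSpK : ∀ ν, Sp (K ν) = K (-ν)) (hSpJ : ∀ ν, Sp (Jp ν) = Jp (-ν))
    (Sm : Am ≃ₗ[𝔽] Am) (hSm1 : Sm 1 = 1) (hSmanti : ∀ x y, Sm (x * y) = Sm y * Sm x)
    (hSmF : ∀ i, Sm (F i) = -(J' (-(δZ i)) * F i * K' (-(δZ i))))
    (hSmK' : ∀ ν, Sm (K' ν) = K' (-ν)) (hSmJ' : ∀ ν, Sm (J' ν) = J' (-ν))
    (ιp : FA 𝔽 I →ₐ[𝔽] Ap) (hιp : ∀ i, ιp (θ 𝔽 i) = E i)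
    (ιm : FA 𝔽 I →ₗ[𝔽] Am) (hιm1 : ιm 1 = 1)
    (hιmanti : ∀ x y : FA 𝔽 I, ιm (x * y) = ιm y * ιm x)
    (hιmθ : ∀ i, ιm (θ 𝔽 i) = F i)
    {Bp : Type} [Ring Bp] [Algebra 𝔽 Bp] (qp : Ap →ₐ[𝔽] Bp)
    (hqpsurj : Function.Surjective qp)
    (hqpker : ∀ x, qp x = 0 ↔ x ∈ Submodule.span 𝔽 {z : Ap | ∃ (a b : Ap) (i j : I), i ≠ j ∧ z = a * ιp (Dij cd v βg i j) * b})
    {Bm : Type} [Ring Bm] [Algebra 𝔽 Bm] (qm : Am →ₐ[𝔽] Bm)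
    (hqmsurj : Function.Surjective qm)
    (hqmker : ∀ y, qm y = 0 ↔ y ∈ Submodule.span 𝔽 {z : Am | ∃ (a b : Am) (i j : I), i ≠ j ∧ z = a * ιm (Dij cd v βg i j) * b})
    (ΔBp : Bp →ₐ[𝔽] (Bp ⊗[𝔽] Bp))
    (hΔBp : ∀ x, ΔBp (qp x) = Algebra.TensorProduct.map qp qp (Δp x))
    (εBp : Bp →ₐ[𝔽] 𝔽) (hεBp : ∀ x, εBp (qp x) = εp x)
    (SBp : Bp →ₗ[𝔽] Bp) (hSBp : ∀ x, SBp (qp x) = qp (Sp x))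
    (ΔBm : Bm →ₐ[𝔽] (Bm ⊗[𝔽] Bm))
    (hΔBm : ∀ y, ΔBm (qm y) = Algebra.TensorProduct.map qm qm (Δm y))
    (εBm : Bm →ₐ[𝔽] 𝔽) (hεBm : ∀ y, εBm (qm y) = εm y)
    (SBm : Bm ≃ₗ[𝔽] Bm) (hSBm : ∀ y, SBm (qm y) = qm (Sm y))
    {D : Type} [Ring D] [Algebra 𝔽 D] (ip : Bp →ₐ[𝔽] D) (im : Bm →ₐ[𝔽] D)
    (eD : (Bp ⊗[𝔽] Bm) ≃ₗ[𝔽] D) (heD : ∀ x y, eD (x ⊗ₜ[𝔽] y) = ip x * im y)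
    (ψ : Bp →ₗ[𝔽] Bm →ₗ[𝔽] 𝔽) (hψ : ∀ x y, ψ (qp x) (qm y) = εm (ρ x y))
    (hcross : ∀ (x : Bp) (y : Bm) (n m : ℕ) (x₁ x₂ x₃ : Fin n → Bp) (y₁ y₂ y₃ : Fin m → Bm),
      Algebra.TensorProduct.map ΔBp (AlgHom.id 𝔽 Bp) (ΔBp x)
        = ∑ k, (x₁ k ⊗ₜ[𝔽] x₂ k) ⊗ₜ[𝔽] x₃ k →
      Algebra.TensorProduct.map ΔBm (AlgHom.id 𝔽 Bm) (ΔBm y)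
        = ∑ l, (y₁ l ⊗ₜ[𝔽] y₂ l) ⊗ₜ[𝔽] y₃ l →
      im y * ip x = ∑ k, ∑ l,
        (ψ (x₁ k) (SBm (y₁ l)) * ψ (x₃ k) (y₃ l)) • (ip (x₂ k) * im (y₂ l)))
    :
    ∀ i j : I,
      im (qm (K' (δZ i))) * ip (qp (E j))
        = ((ang cd v βg ξg (δZ j) (δZ i))⁻¹ * ξg i j) •
            (ip (qp (E j)) * im (qm (K' (δZ i)))) ∧
      im (qm (J' (δZ i))) * ip (qp (E j)) = ip (qp (E j)) * im (qm (J' (δZ i))) ∧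
      im (qm (F j)) * ip (qp (K (δZ i)))
        = ang cd v βg ξg (δZ i) (δZ j) • (ip (qp (K (δZ i))) * im (qm (F j))) ∧
      im (qm (F j)) * ip (qp (Jp (δZ i)))
        = ξg j i • (ip (qp (Jp (δZ i))) * im (qm (F j))) ∧
      ip (qp (E i)) * im (qm (F j)) - (ξg j i)⁻¹ • (im (qm (F j)) * ip (qp (E i)))
        = if i = j then (v ^ cd.d i - v ^ (-(cd.d i)))⁻¹ •
              (ip (qp (K (δZ i))) * im (qm (J' (δZ i)))
                - ip (qp (Jp (δZ i))) * im (qm (K' (δZ i))))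
          else 0 := by

  intro i j
  have hv0 : v ≠ 0 := fun h => hv (h ▸ isAlgebraic_zero)
  -- basic word / weight facts
  have hwp1 : wordProd F (1 : FreeMonoid I) = 1 := by
    simp [wordProd]
  have hwpof : ∀ b : I, wordProd F (FreeMonoid.of b) = F b := by
    intro b; simp [wordProd]
  have hwt1 : nz (wt (1 : FreeMonoid I)) = (0 : I →₀ ℤ) := by
    simp [wt, nz]
  have hwtof : ∀ b : I, nz (wt (FreeMonoid.of b)) = δZ b := by
    intro b; simp [wt, nz, δZ]
  -- extZ facts
  have hext0r : ∀ (g : I → I → 𝔽) (ν : I →₀ ℤ), extZ g ν 0 = 1 := by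
    intro g ν; simp [extZ, Finsupp.prod]
  have hext0l : ∀ (g : I → I → 𝔽) (ν : I →₀ ℤ), extZ g 0 ν = 1 := by
    intro g ν; simp [extZ]
  have hextss : ∀ (g : I → I → 𝔽) (a b : I), extZ g (δZ a) (δZ b) = g a b := by
    intro g a b
    simp [extZ, δZ, Finsupp.prod_single_index]
  have hextsn : ∀ (g : I → I → 𝔽) (a b : I), extZ g (δZ a) (-(δZ b)) = (g a b)⁻¹ := by
    intro g a b
    rw [extZ, δZ]
    rw [Finsupp.prod_single_index (by simp [Finsupp.prod])]
    rw [show -(δZ b) = Finsupp.single b (-1 : ℤ) from by rw [δZ, ← Finsupp.single_neg]]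
    rw [Finsupp.prod_single_index (by simp)]
    simp
  have hangss : ∀ a b : I, ang cd v βg ξg (δZ a) (δZ b)
      = v ^ (-(cd.c a b)) * βg a b * ξg b a := by
    intro a b; exact hextss _ a b
  have hangsn : ∀ a b : I, ang cd v βg ξg (δZ a) (-(δZ b))
      = (ang cd v βg ξg (δZ a) (δZ b))⁻¹ := by
    intro a b; rw [ang, hextsn, ← hextss (fun a b => v ^ (-cd.c a b) * βg a b * ξg b a) a b]
  have hang0 : ∀ a : I, ang cd v βg ξg (δZ a) 0 = 1 := by
    intro a; exact hext0r _ _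

  -- iS / cK / cJ on basis-type elements
  have hiSK' : ∀ (a : I) (τ : I →₀ ℤ), iS a (K' τ) = 0 := by
    intro a τ; have h := hiS0 a τ 0; rwa [hJ'0, mul_one] at h
  have hiSJ' : ∀ (a : I) (τ : I →₀ ℤ), iS a (J' τ) = 0 := by
    intro a τ; have h := hiS0 a 0 τ; rwa [hK'0, one_mul] at h
  have hcKK' : ∀ (a : I) (τ : I →₀ ℤ), cK (δZ a) (K' τ)
      = (ang cd v βg ξg (δZ a) τ) • K' τ := by
    intro a τ
    have h := hcK (δZ a) τ 0 1
    rwa [hwp1, mul_one, hJ'0, mul_one, hwt1, hang0, mul_one] at h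
  have hcKJ' : ∀ (a : I) (τ : I →₀ ℤ), cK (δZ a) (J' τ) = J' τ := by
    intro a τ
    have h := hcK (δZ a) 0 τ 1
    rwa [hwp1, mul_one, hK'0, one_mul, hwt1, hang0, one_mul, one_smul] at h
  have hcJK' : ∀ (a : I) (τ : I →₀ ℤ), cJ (δZ a) (K' τ) = (extZ ξg τ (δZ a)) • K' τ := by
    intro a τ
    have h := hcJ (δZ a) τ 0 1
    rwa [hwp1, mul_one, hJ'0, mul_one, hwt1, hext0l, mul_one] at h
  have hcJJ' : ∀ (a : I) (τ : I →₀ ℤ), cJ (δZ a) (J' τ) = J' τ := by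
    intro a τ
    have h := hcJ (δZ a) 0 τ 1
    rwa [hwp1, mul_one, hK'0, one_mul, hwt1, hext0l, one_mul, one_smul] at h
  have hcKF : ∀ (a b : I), cK (δZ a) (F b) = (ang cd v βg ξg (δZ a) (δZ b)) • F b := by
    intro a b
    have h := hcK (δZ a) 0 0 (FreeMonoid.of b)
    rwa [hwpof, hK'0, one_mul, hJ'0, mul_one, hwtof, hang0, one_mul] at h
  have hcJF : ∀ (a b : I), cJ (δZ a) (F b) = (extZ ξg (δZ b) (δZ a)) • F b := by
    intro a b
    have h := hcJ (δZ a) 0 0 (FreeMonoid.of b)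
    rwa [hwpof, hK'0, one_mul, hJ'0, mul_one, hwtof, hext0l, one_mul] at h
  have hiSFJ : ∀ (a b : I) (τ : I →₀ ℤ), iS a (F b * J' τ)
      = (if b = a then ξg b a else 0) • J' τ := by
    intro a b τ
    rw [hiSmul, hiSF a b, hcJJ', hiSJ', mul_zero, add_zero]
    by_cases h : b = a <;> simp [h, smul_mul_assoc]
  have hiSKFJ : ∀ (a b : I) (τ τ' : I →₀ ℤ), iS a (K' τ * (F b * J' τ'))
      = (ang cd v βg ξg (δZ a) τ * (if b = a then ξg b a else 0)) • (K' τ * J' τ') := by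
    intro a b τ τ'
    rw [hiSmul, hiSK', zero_mul, zero_add, hcKK', hiSFJ, smul_mul_smul_comm]
  -- ψ values
  have hψEK' : ∀ (a : I) (τ : I →₀ ℤ), ψ (qp (E a)) (qm (K' τ)) = 0 := by
    intro a τ; rw [hψ, hρE]
    simp [LinearMap.smul_apply, hiSK']
  have hψEJ' : ∀ (a : I) (τ : I →₀ ℤ), ψ (qp (E a)) (qm (J' τ)) = 0 := by
    intro a τ; rw [hψ, hρE]
    simp [LinearMap.smul_apply, hiSJ']
  have hψKK' : ∀ (a : I) (τ : I →₀ ℤ), ψ (qp (K (δZ a))) (qm (K' τ))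
      = ang cd v βg ξg (δZ a) τ := by
    intro a τ; rw [hψ, hρK]
    rw [hcKK', map_smul, hεmK', smul_eq_mul, mul_one]
  have hψKJ' : ∀ (a : I) (τ : I →₀ ℤ), ψ (qp (K (δZ a))) (qm (J' τ)) = 1 := by
    intro a τ; rw [hψ, hρK, hcKJ', hεmJ']
  have hψJK' : ∀ (a : I) (τ : I →₀ ℤ), ψ (qp (Jp (δZ a))) (qm (K' τ))
      = extZ ξg τ (δZ a) := by
    intro a τ; rw [hψ, hρJ]
    rw [hcJK', map_smul, hεmK', smul_eq_mul, mul_one]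
  have hψJJ' : ∀ (a : I) (τ : I →₀ ℤ), ψ (qp (Jp (δZ a))) (qm (J' τ)) = 1 := by
    intro a τ; rw [hψ, hρJ, hcJJ', hεmJ']
  have hψKF : ∀ (a b : I), ψ (qp (K (δZ a))) (qm (F b)) = 0 := by
    intro a b; rw [hψ, hρK]
    rw [hcKF, map_smul, hεmF, smul_eq_mul, mul_zero]
  have hψJF : ∀ (a b : I), ψ (qp (Jp (δZ a))) (qm (F b)) = 0 := by
    intro a b; rw [hψ, hρJ]
    rw [hcJF, map_smul, hεmF, smul_eq_mul, mul_zero]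
  have hψEF : ∀ (a b : I), ψ (qp (E a)) (qm (F b))
      = (v ^ (-cd.d a) - v ^ cd.d a)⁻¹ * (if b = a then ξg b a else 0) := by
    intro a b; rw [hψ, hρE]
    rw [LinearMap.smul_apply, map_smul, hiSF, smul_eq_mul]
    by_cases h : b = a <;> simp [h]

  -- commutation with negative group-likes on the minus side
  have hJ'ne : ∀ (a : I) (b : I), J' (-(δZ a)) * F b = F b * J' (-(δZ a)) := by
    intro a b
    have h1 : J' (-(δZ a)) * J' (δZ a) = 1 := by
      rw [← hJ'add]; simp [hJ'0]
    have h2 : J' (δZ a) * J' (-(δZ a)) = 1 := by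
      rw [← hJ'add]; simp [hJ'0]
    calc J' (-(δZ a)) * F b
        = J' (-(δZ a)) * (J' (δZ a) * F b) * J' (-(δZ a)) := by
          rw [hJ'F, ← mul_assoc, mul_assoc (J' (-(δZ a)) * F b), h2, mul_one]
      _ = F b * J' (-(δZ a)) := by
          rw [← mul_assoc, h1, one_mul]
  have hFK'ne : ∀ b : I, F b * K' (-(δZ b))
      = (ang cd v βg ξg (δZ b) (δZ b) * (ξg b b)⁻¹) • (K' (-(δZ b)) * F b) := by
    intro b
    have h1 : K' (-(δZ b)) * K' (δZ b) = 1 := by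
      rw [← hK'add]; simp [hK'0]
    have h2 : K' (δZ b) * K' (-(δZ b)) = 1 := by
      rw [← hK'add]; simp [hK'0]
    calc F b * K' (-(δZ b))
        = K' (-(δZ b)) * (K' (δZ b) * F b) * K' (-(δZ b)) := by
          rw [← mul_assoc, h1, one_mul]
      _ = (ang cd v βg ξg (δZ b) (δZ b) * (ξg b b)⁻¹) • (K' (-(δZ b)) * F b) := by
          rw [hK'F, mul_smul_comm, smul_mul_assoc]
          rw [mul_assoc, mul_assoc, h2, mul_one]
  have hSmF' : ∀ b : I, Sm (F b)
      = -((ang cd v βg ξg (δZ b) (δZ b) * (ξg b b)⁻¹) •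
          (K' (-(δZ b)) * (F b * J' (-(δZ b))))) := by
    intro b
    rw [hSmF]
    congr 1
    calc J' (-(δZ b)) * F b * K' (-(δZ b))
        = F b * K' (-(δZ b)) * J' (-(δZ b)) := by
          rw [hJ'ne, mul_assoc, ← hK'J', ← mul_assoc]
      _ = (ang cd v βg ξg (δZ b) (δZ b) * (ξg b b)⁻¹) •
            (K' (-(δZ b)) * (F b * J' (-(δZ b)))) := by
          rw [hFK'ne, smul_mul_assoc, mul_assoc]
  have hψESmF : ∀ a b : I, ψ (qp (E a)) (qm (Sm (F b)))
      = -((v ^ (-cd.d a) - v ^ cd.d a)⁻¹ *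
          ((ang cd v βg ξg (δZ b) (δZ b) * (ξg b b)⁻¹) *
            ((ang cd v βg ξg (δZ a) (δZ b))⁻¹ * (if b = a then ξg b a else 0)))) := by
    intro a b
    rw [hψ, hρE, hSmF', LinearMap.smul_apply]
    simp only [map_neg, map_smul]
    rw [hiSKFJ, hangsn]
    simp only [smul_smul, map_neg, map_smul, map_mul, hεmK', hεmJ', smul_eq_mul, mul_one]
    ring
  have hψKSmF : ∀ a b : I, ψ (qp (K (δZ a))) (qm (Sm (F b))) = 0 := by
    intro a b
    rw [hψ, hρK, hSmF', map_neg, map_smul]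
    rw [show K' (-(δZ b)) * (F b * J' (-(δZ b)))
        = K' (-(δZ b)) * wordProd F (FreeMonoid.of b) * J' (-(δZ b)) by
      rw [hwpof, mul_assoc]]
    rw [hcK]
    simp [hwpof, hεmF]
  have hψJSmF : ∀ a b : I, ψ (qp (Jp (δZ a))) (qm (Sm (F b))) = 0 := by
    intro a b
    rw [hψ, hρJ, hSmF', map_neg, map_smul]
    rw [show K' (-(δZ b)) * (F b * J' (-(δZ b)))
        = K' (-(δZ b)) * wordProd F (FreeMonoid.of b) * J' (-(δZ b)) by
      rw [hwpof, mul_assoc]]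
    rw [hcJ]
    simp [hwpof, hεmF]

  -- Δ² expansions
  have hΔ2E : ∀ a : I, Algebra.TensorProduct.map ΔBp (AlgHom.id 𝔽 Bp) (ΔBp (qp (E a)))
      = ∑ k : Fin 3,
        ((![qp (E a), qp (K (δZ a)), qp (K (δZ a))] k
            ⊗ₜ[𝔽] ![qp (Jp (δZ a)), qp (E a), qp (K (δZ a))] k)
          ⊗ₜ[𝔽] ![qp (Jp (δZ a)), qp (Jp (δZ a)), qp (E a)] k) := by
    intro a
    rw [hΔBp, hΔpE]
    simp only [map_add, Algebra.TensorProduct.map_tmul, AlgHom.coe_id, id_eq]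
    rw [hΔBp, hΔBp, hΔpE, hΔpK]
    simp only [map_add, Algebra.TensorProduct.map_tmul, Fin.sum_univ_three,
      Matrix.cons_val_zero, Matrix.cons_val_one, Matrix.head_cons, Matrix.cons_val_two,
      Matrix.tail_cons, TensorProduct.add_tmul]
  have hΔ2K : Algebra.TensorProduct.map ΔBp (AlgHom.id 𝔽 Bp) (ΔBp (qp (K (δZ i))))
      = ∑ k : Fin 1,
        ((![qp (K (δZ i))] k ⊗ₜ[𝔽] ![qp (K (δZ i))] k) ⊗ₜ[𝔽] ![qp (K (δZ i))] k) := by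
    rw [hΔBp, hΔpK]
    simp only [Algebra.TensorProduct.map_tmul, AlgHom.coe_id, id_eq]
    rw [hΔBp, hΔpK]
    simp [Fin.sum_univ_one]
  have hΔ2J : Algebra.TensorProduct.map ΔBp (AlgHom.id 𝔽 Bp) (ΔBp (qp (Jp (δZ i))))
      = ∑ k : Fin 1,
        ((![qp (Jp (δZ i))] k ⊗ₜ[𝔽] ![qp (Jp (δZ i))] k) ⊗ₜ[𝔽] ![qp (Jp (δZ i))] k) := by
    rw [hΔBp, hΔpJ]
    simp only [Algebra.TensorProduct.map_tmul, AlgHom.coe_id, id_eq]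
    rw [hΔBp, hΔpJ]
    simp [Fin.sum_univ_one]
  have hΔ2F : ∀ b : I, Algebra.TensorProduct.map ΔBm (AlgHom.id 𝔽 Bm) (ΔBm (qm (F b)))
      = ∑ l : Fin 3,
        ((![qm (J' (δZ b)), qm (J' (δZ b)), qm (F b)] l
            ⊗ₜ[𝔽] ![qm (J' (δZ b)), qm (F b), qm (K' (δZ b))] l)
          ⊗ₜ[𝔽] ![qm (F b), qm (K' (δZ b)), qm (K' (δZ b))] l) := by
    intro b
    rw [hΔBm, hΔmF]
    simp only [map_add, Algebra.TensorProduct.map_tmul, AlgHom.coe_id, id_eq]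
    rw [hΔBm, hΔBm, hΔmF, hΔmJ']
    simp only [map_add, Algebra.TensorProduct.map_tmul, Fin.sum_univ_three,
      Matrix.cons_val_zero, Matrix.cons_val_one, Matrix.head_cons, Matrix.cons_val_two,
      Matrix.tail_cons, TensorProduct.add_tmul, add_assoc]
  have hΔ2K' : Algebra.TensorProduct.map ΔBm (AlgHom.id 𝔽 Bm) (ΔBm (qm (K' (δZ i))))
      = ∑ l : Fin 1,
        ((![qm (K' (δZ i))] l ⊗ₜ[𝔽] ![qm (K' (δZ i))] l) ⊗ₜ[𝔽] ![qm (K' (δZ i))] l) := by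
    rw [hΔBm, hΔmK']
    simp only [Algebra.TensorProduct.map_tmul, AlgHom.coe_id, id_eq]
    rw [hΔBm, hΔmK']
    simp [Fin.sum_univ_one]
  have hΔ2J' : Algebra.TensorProduct.map ΔBm (AlgHom.id 𝔽 Bm) (ΔBm (qm (J' (δZ i))))
      = ∑ l : Fin 1,
        ((![qm (J' (δZ i))] l ⊗ₜ[𝔽] ![qm (J' (δZ i))] l) ⊗ₜ[𝔽] ![qm (J' (δZ i))] l) := by
    rw [hΔBm, hΔmJ']
    simp only [Algebra.TensorProduct.map_tmul, AlgHom.coe_id, id_eq]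
    rw [hΔBm, hΔmJ']
    simp [Fin.sum_univ_one]

  refine ⟨?_, ?_, ?_, ?_, ?_⟩
  · -- K' E relation
    have h := hcross (qp (E j)) (qm (K' (δZ i))) 3 1
      ![qp (E j), qp (K (δZ j)), qp (K (δZ j))]
      ![qp (Jp (δZ j)), qp (E j), qp (K (δZ j))]
      ![qp (Jp (δZ j)), qp (Jp (δZ j)), qp (E j)]
      ![qm (K' (δZ i))] ![qm (K' (δZ i))] ![qm (K' (δZ i))]
      (hΔ2E j) hΔ2K'
    simp only [Fin.sum_univ_three, Fin.sum_univ_one, Matrix.cons_val_zero,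
      Matrix.cons_val_one, Matrix.head_cons, Matrix.cons_val_two, Matrix.tail_cons,
      hSBm, hSmK'] at h
    simp only [hψEK', hψKK', hψJK', hextss, hangsn, zero_mul, mul_zero, zero_smul,
      add_zero, zero_add] at h
    exact h
  · -- J' E relation
    have h := hcross (qp (E j)) (qm (J' (δZ i))) 3 1
      ![qp (E j), qp (K (δZ j)), qp (K (δZ j))]
      ![qp (Jp (δZ j)), qp (E j), qp (K (δZ j))]
      ![qp (Jp (δZ j)), qp (Jp (δZ j)), qp (E j)]
      ![qm (J' (δZ i))] ![qm (J' (δZ i))] ![qm (J' (δZ i))]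
      (hΔ2E j) hΔ2J'
    simp only [Fin.sum_univ_three, Fin.sum_univ_one, Matrix.cons_val_zero,
      Matrix.cons_val_one, Matrix.head_cons, Matrix.cons_val_two, Matrix.tail_cons,
      hSBm, hSmJ'] at h
    simp only [hψEJ', hψKJ', hψJJ', zero_mul, mul_zero, zero_smul, one_mul, mul_one,
      add_zero, zero_add, one_smul] at h
    exact h
  · -- F K relation
    have h := hcross (qp (K (δZ i))) (qm (F j)) 1 3
      ![qp (K (δZ i))] ![qp (K (δZ i))] ![qp (K (δZ i))]
      ![qm (J' (δZ j)), qm (J' (δZ j)), qm (F j)]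
      ![qm (J' (δZ j)), qm (F j), qm (K' (δZ j))]
      ![qm (F j), qm (K' (δZ j)), qm (K' (δZ j))]
      hΔ2K (hΔ2F j)
    simp only [Fin.sum_univ_three, Fin.sum_univ_one, Matrix.cons_val_zero,
      Matrix.cons_val_one, Matrix.head_cons, Matrix.cons_val_two, Matrix.tail_cons,
      hSBm, hSmJ'] at h
    simp only [hψKF, hψKJ', hψKK', hψKSmF, zero_mul, mul_zero, zero_smul, one_mul,
      mul_one, add_zero, zero_add] at h
    exact h
  · -- F Jp relation
    have h := hcross (qp (Jp (δZ i))) (qm (F j)) 1 3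
      ![qp (Jp (δZ i))] ![qp (Jp (δZ i))] ![qp (Jp (δZ i))]
      ![qm (J' (δZ j)), qm (J' (δZ j)), qm (F j)]
      ![qm (J' (δZ j)), qm (F j), qm (K' (δZ j))]
      ![qm (F j), qm (K' (δZ j)), qm (K' (δZ j))]
      hΔ2J (hΔ2F j)
    simp only [Fin.sum_univ_three, Fin.sum_univ_one, Matrix.cons_val_zero,
      Matrix.cons_val_one, Matrix.head_cons, Matrix.cons_val_two, Matrix.tail_cons,
      hSBm, hSmJ'] at h
    simp only [hψJF, hψJJ', hψJK', hψJSmF, hextss, zero_mul, mul_zero, zero_smul,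
      one_mul, mul_one, add_zero, zero_add] at h
    exact h
  · -- E F relation
    have h := hcross (qp (E i)) (qm (F j)) 3 3
      ![qp (E i), qp (K (δZ i)), qp (K (δZ i))]
      ![qp (Jp (δZ i)), qp (E i), qp (K (δZ i))]
      ![qp (Jp (δZ i)), qp (Jp (δZ i)), qp (E i)]
      ![qm (J' (δZ j)), qm (J' (δZ j)), qm (F j)]
      ![qm (J' (δZ j)), qm (F j), qm (K' (δZ j))]
      ![qm (F j), qm (K' (δZ j)), qm (K' (δZ j))]
      (hΔ2E i) (hΔ2F j)
    simp only [Fin.sum_univ_three, Matrix.cons_val_zero, Matrix.cons_val_one,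
      Matrix.head_cons, Matrix.cons_val_two, Matrix.tail_cons, hSBm, hSmJ', hSmK'] at h
    simp only [hψEF, hψESmF, hψKSmF, hψEK', hψEJ', hψKJ', hψJK', hψJF, hψKK', hψJJ',
      hextss, zero_mul, mul_zero, zero_smul, add_zero, zero_add, one_mul] at h
    by_cases hij : i = j
    · subst hij
      simp only [eq_self_iff_true, if_true] at h ⊢
      set ξv := ξg i i with hξv
      set av := ang cd v βg ξg (δZ i) (δZ i) with hav
      set cv := (v ^ (-cd.d i) - v ^ cd.d i)⁻¹ with hcv
      have hξv0 : ξv ≠ 0 := hξne i i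
      have hav0 : av ≠ 0 := by
        rw [hav, hangss, hβii, mul_one]
        exact mul_ne_zero (zpow_ne_zero _ hv0) (hξne i i)
      have hecv : (v ^ cd.d i - v ^ (-cd.d i))⁻¹ = -cv := by
        rw [hcv, ← inv_neg, neg_sub]
      rw [h, hecv]
      match_scalars <;> field_simp <;> ring
    · have hji : ¬ (j = i) := fun hh => hij hh.symm
      simp only [if_neg hij, if_neg hji, mul_zero, zero_mul, neg_zero, zero_smul,
        smul_zero, add_zero, zero_add] at h ⊢
      rw [h, smul_smul, inv_mul_cancel₀ (hξne j i), one_smul, sub_self]
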